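/- For any nonzero x ∈ ℂ^n and any λ ∈ ℂ satisfying λ²·x*Mx + λ·x*Cx + x*Kx = 0, one has Re λ ≤ γ; i.e., γ is an upper bound for the real part of the numerical range of the quadratic matrix pencil K(λ). -/

import Mathlib

open Matrix
open scoped ComplexOrder

noncomputable section

/-- The value `x* P x` (which is real for Hermitian `P`), taken as its real part. -/
def qf {n : ℕ} (P : Matrix (Fin n) (Fin n) ℂ) (x : Fin n → ℂ) : ℝ :=
  (star x ⬝ᵥ P.mulVec x).re

/-- The (positive semidefinite) square root of a positive semidefinite matrix,
extended by `0` to all matrices. -/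
def msqrt {n : ℕ} (P : Matrix (Fin n) (Fin n) ℂ) : Matrix (Fin n) (Fin n) ℂ :=
  open scoped Classical in
  if h : P.PosSemidef then
    (h.1.eigenvectorUnitary : Matrix (Fin n) (Fin n) ℂ) *
      diagonal ((fun r : ℝ => (r : ℂ)) ∘ Real.sqrt ∘ h.1.eigenvalues) *
      (star h.1.eigenvectorUnitary : Matrix (Fin n) (Fin n) ℂ)
  else 0

/-- The quadratic matrix pencil `K(λ) = λ²M + λC + K`. -/
def Kpen {n : ℕ} (M C K : Matrix (Fin n) (Fin n) ℂ) (lam : ℂ) :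
    Matrix (Fin n) (Fin n) ℂ :=
  lam ^ 2 • M + lam • C + K

/-- The real part of the `+`-root of the scalar quadratic
`m(x) λ² + c(x) λ + k(x) = 0`. -/
def rfun {n : ℕ} (M C K : Matrix (Fin n) (Fin n) ℂ) (x : Fin n → ℂ) : ℝ :=
  open scoped Classical in
  if (qf C x) ^ 2 ≥ 4 * qf M x * qf K x then
    (-(qf C x) + Real.sqrt ((qf C x) ^ 2 - 4 * qf M x * qf K x)) / (2 * qf M x)
  else
    -(qf C x) / (2 * qf M x)

/-- The spectral-shift bound `γ = sup_{x ≠ 0} Re p₊(x)`. -/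
def gam {n : ℕ} (M C K : Matrix (Fin n) (Fin n) ℂ) : ℝ :=
  sSup {y : ℝ | ∃ x : Fin n → ℂ, x ≠ 0 ∧ rfun M C K x = y}

/-- The phase-space matrix `A = [[0, K½ M⁻½], [−M⁻½ K½, −M⁻½ C M⁻½]]`. -/
def phaseA {n : ℕ} (M C K : Matrix (Fin n) (Fin n) ℂ) :
    Matrix (Fin n ⊕ Fin n) (Fin n ⊕ Fin n) ℂ :=
  fromBlocks 0 (msqrt K * (msqrt M)⁻¹)
    (-((msqrt M)⁻¹ * msqrt K)) (-((msqrt M)⁻¹ * C * (msqrt M)⁻¹))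

/-- The operator norm of a matrix with respect to the Euclidean norm. -/
def opNorm {m : Type*} [Fintype m] [DecidableEq m] (A : Matrix m m ℂ) : ℝ :=
  ‖toEuclideanCLM (𝕜 := ℂ) A‖

/-- The block matrix `L(μ) = [[K½ K(μ)⁻½, 0], [μ M½ K(μ)⁻½, I]]`. -/
def Lmat {n : ℕ} (M C K : Matrix (Fin n) (Fin n) ℂ) (mu : ℝ) :
    Matrix (Fin n ⊕ Fin n) (Fin n ⊕ Fin n) ℂ :=
  fromBlocks (msqrt K * (msqrt (Kpen M C K (mu : ℂ)))⁻¹) 0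
    ((mu : ℂ) • (msqrt M * (msqrt (Kpen M C K (mu : ℂ)))⁻¹)) 1

lemma qf_spec {n : ℕ} {P : Matrix (Fin n) (Fin n) ℂ} (hP : P.PosDef)
    {x : Fin n → ℂ} (hx : x ≠ 0) :
    star x ⬝ᵥ P.mulVec x = (qf P x : ℂ) ∧ 0 < qf P x := by
  have h := hP.dotProduct_mulVec_pos hx
  rw [Complex.lt_def] at h
  constructor
  · apply Complex.ext <;> simp [qf, h.2.symm]
  · simpa [qf] using h.1

lemma rfun_nonpos {n : ℕ} {M C K : Matrix (Fin n) (Fin n) ℂ}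
    (hM : M.PosDef) (hC : C.PosDef) (hK : K.PosDef)
    {x : Fin n → ℂ} (hx : x ≠ 0) : rfun M C K x ≤ 0 := by
  obtain ⟨-, hm⟩ := qf_spec hM hx
  obtain ⟨-, hc⟩ := qf_spec hC hx
  obtain ⟨-, hk⟩ := qf_spec hK hx
  unfold rfun
  split_ifs with h
  · apply div_nonpos_of_nonpos_of_nonneg _ (by positivity)
    have h1 : Real.sqrt ((qf C x) ^ 2 - 4 * qf M x * qf K x) ≤ qf C x := by
      have h2 : Real.sqrt ((qf C x) ^ 2 - 4 * qf M x * qf K x)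
          ≤ Real.sqrt ((qf C x) ^ 2) := Real.sqrt_le_sqrt (by nlinarith)
      rwa [Real.sqrt_sq hc.le] at h2
    linarith
  · exact div_nonpos_of_nonpos_of_nonneg (by linarith) (by positivity)

lemma re_le_rfun {n : ℕ} {M C K : Matrix (Fin n) (Fin n) ℂ}
    (hM : M.PosDef) (hC : C.PosDef) (hK : K.PosDef)
    {x : Fin n → ℂ} (hx : x ≠ 0) {lam : ℂ}
    (h : star x ⬝ᵥ (Kpen M C K lam).mulVec x = 0) :
    lam.re ≤ rfun M C K x := by
  obtain ⟨hMe, hm⟩ := qf_spec hM hx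
  obtain ⟨hCe, hc⟩ := qf_spec hC hx
  obtain ⟨hKe, hk⟩ := qf_spec hK hx
  set m := qf M x
  set c := qf C x
  set k := qf K x
  have heq : lam ^ 2 * (m : ℂ) + lam * (c : ℂ) + (k : ℂ) = 0 := by
    rw [← hMe, ← hCe, ← hKe]
    simpa [Kpen, add_mulVec, smul_mulVec, dotProduct_add,
      dotProduct_smul, smul_eq_mul, mul_comm] using h
  set a := lam.re
  set b := lam.im
  have h1 := congrArg Complex.re heq
  have h2 := congrArg Complex.im heq
  simp only [pow_two, Complex.add_re, Complex.mul_re, Complex.mul_im,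
    Complex.add_im, Complex.ofReal_re, Complex.ofReal_im, Complex.zero_re,
    Complex.zero_im, mul_zero, zero_mul, add_zero, sub_zero] at h1 h2
  simp only [show lam.re = a from rfl, show lam.im = b from rfl] at h1 h2
  by_cases hb : b = 0
  · rw [hb] at h1
    simp only [mul_zero, zero_mul, sub_zero, add_zero] at h1
    have hdisc : 0 ≤ c ^ 2 - 4 * m * k := by nlinarith [sq_nonneg (2 * m * a + c)]
    have hsq : (2 * m * a + c) ^ 2 = c ^ 2 - 4 * m * k := by nlinarith
    have hle : 2 * m * a + c ≤ Real.sqrt (c ^ 2 - 4 * m * k) := by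
      rw [← hsq, Real.sqrt_sq_eq_abs]
      exact le_abs_self _
    rw [rfun, if_pos (by linarith)]
    rw [le_div_iff₀ (by positivity)]
    linarith
  · have hac : 2 * m * a + c = 0 := by
      have hz : b * (2 * m * a + c) = 0 := by nlinarith
      rcases mul_eq_zero.mp hz with h' | h'
      · exact absurd h' hb
      · exact h'
    have ha : a = -c / (2 * m) := by field_simp; linarith
    rw [ha, rfun]
    split_ifs with hd
    · apply div_le_div_of_nonneg_right ?_ (by positivity)
      have := Real.sqrt_nonneg (c ^ 2 - 4 * m * k)
      linarith
    · exact le_refl _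

/-- `γ` bounds the real part of the numerical range of the pencil `K(λ)`:
if `x ≠ 0` and `x* K(λ) x = 0`, then `Re λ ≤ γ`. -/
theorem numericalRange_re_le_gamma {n : ℕ} (hn : 1 ≤ n)
    (M C K : Matrix (Fin n) (Fin n) ℂ)
    (hM : M.PosDef) (hC : C.PosDef) (hK : K.PosDef) :
    ∀ x : Fin n → ℂ, x ≠ 0 → ∀ lam : ℂ,
      star x ⬝ᵥ (Kpen M C K lam).mulVec x = 0 → lam.re ≤ gam M C K := by
  intro x hx lam h
  have hbdd : BddAbove {y : ℝ | ∃ x : Fin n → ℂ, x ≠ 0 ∧ rfun M C K x = y} := by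
    refine ⟨0, ?_⟩
    rintro y ⟨z, hz, rfl⟩
    exact rfun_nonpos hM hC hK hz
  calc lam.re ≤ rfun M C K x := re_le_rfun hM hC hK hx h
    _ ≤ gam M C K := le_csSup hbdd ⟨x, hx, rfl⟩

end
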